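/- Let G be a group, V a finite-dimensional real inner product space, ρ : G →* (V ≃ₗᵢ[ℝ] V) an orthogonal representation, and W : Fin p → Submodule ℝ V a family of invariant submodules such that: the W i are pairwise orthogonal (⟪x, y⟫ = 0 whenever x ∈ W i, y ∈ W j, i ≠ j) and ⨆ i, W i = ⊤; each W i is irreducible (W i ≠ ⊥ and the only invariant submodules contained in W i are ⊥ and W i); and for all i ≠ j every intertwining linear map from W i to W j is zero. Then the set of linear maps A : V →ₗ[ℝ] V that are both equivariant and self-adjoint is an ℝ-submodule of V →ₗ[ℝ] V of finrank exactly p. -/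

import Mathlib

open scoped RealInnerProductSpace

theorem isotropic_symmetric_operators_finrank
    {G : Type*} [Group G] {V : Type*} [NormedAddCommGroup V]
    [InnerProductSpace ℝ V] [FiniteDimensional ℝ V]
    {p : ℕ} (ρ : G →* (V ≃ₗᵢ[ℝ] V))
    (W : Fin p → Submodule ℝ V)
    (hinv : ∀ (i : Fin p) (g : G), ∀ x ∈ W i, ρ g x ∈ W i)
    (horth : ∀ (i j : Fin p), i ≠ j → ∀ x ∈ W i, ∀ y ∈ W j, ⟪x, y⟫ = 0)
    (hsup : ⨆ i, W i = ⊤)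
    (hirr : ∀ i : Fin p, W i ≠ ⊥ ∧ ∀ U : Submodule ℝ V,
      (∀ (g : G), ∀ x ∈ U, ρ g x ∈ U) → U ≤ W i → U = ⊥ ∨ U = W i)
    (hnocoupling : ∀ (i j : Fin p), i ≠ j → ∀ f : W i →ₗ[ℝ] W j,
      (∀ (g : G) (x : W i),
        ((f ⟨ρ g (x : V), hinv i g (x : V) x.2⟩ : W j) : V) = ρ g ((f x : W j) : V)) →
      f = 0) :
    ∃ S : Submodule ℝ (V →ₗ[ℝ] V),
      (∀ A : V →ₗ[ℝ] V, A ∈ S ↔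
        ((∀ (g : G) (x : V), A (ρ g x) = ρ g (A x)) ∧
          (∀ x y : V, ⟪A x, y⟫ = ⟪x, A y⟫))) ∧
      Module.finrank ℝ S = p := by
  classical
  -- cancellation lemma for the representation
  have hcancel : ∀ (g : G) (w : V), ρ g (ρ g⁻¹ w) = w := by
    intro g w
    have h1 : ρ g * ρ g⁻¹ = 1 := by rw [← map_mul]; simp
    calc ρ g (ρ g⁻¹ w) = (ρ g * ρ g⁻¹) w := rfl
      _ = w := by rw [h1]; rfl
  -- the orthogonal projections onto the W i, as endomorphisms of V
  set P : Fin p → (V →ₗ[ℝ] V) := fun i =>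
    (W i).subtype ∘ₗ (Submodule.orthogonalProjectionOnto (W i) : V →L[ℝ] W i).toLinearMap with hP
  have hPapply : ∀ (i : Fin p) (x : V), P i x = (Submodule.orthogonalProjectionOnto (W i) x : V) :=
    fun i x => rfl
  have hPmem : ∀ (i : Fin p) (x : V), P i x ∈ W i := fun i x => (Submodule.orthogonalProjectionOnto (W i) x).2
  have hPself : ∀ (i : Fin p), ∀ x ∈ W i, P i x = x := by
    intro i x hx
    rw [hPapply, Submodule.coe_orthogonalProjectionOnto_apply, Submodule.starProjection_eq_self_iff]
    exact hx
  have hPzero : ∀ (i j : Fin p), i ≠ j → ∀ x ∈ W i, P j x = 0 := by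
    intro i j hij x hx
    have hxo : x ∈ (W j)ᗮ := by
      intro y hy
      rw [real_inner_comm]
      exact horth i j hij x hx y hy
    rw [hPapply]
    rw [Submodule.orthogonalProjectionOnto_apply_of_mem_orthogonal hxo]
    simp
  -- the projections sum to the identity
  have hPsum : ∀ x : V, ∑ i, P i x = x := by
    intro x
    have hx : x ∈ LinearMap.eqLocus (∑ i, P i) (LinearMap.id : V →ₗ[ℝ] V) := by
      have hle : ⨆ i, W i ≤ LinearMap.eqLocus (∑ i, P i) (LinearMap.id : V →ₗ[ℝ] V) := by
        refine iSup_le fun i y hy => ?_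
        show (∑ j, P j) y = y
        rw [LinearMap.sum_apply]
        rw [Finset.sum_eq_single i]
        · exact hPself i y hy
        · intro j _ hji
          exact hPzero i j (fun h => hji h.symm) y hy
        · intro h; exact absurd (Finset.mem_univ i) h
      rw [hsup] at hle
      exact hle trivial
    simpa using hx
  -- projections are equivariant
  have hPequiv : ∀ (i : Fin p) (g : G) (x : V), P i (ρ g x) = ρ g (P i x) := by
    intro i g x
    rw [hPapply]
    refine Submodule.eq_starProjection_of_mem_of_inner_eq_zero
      (hinv i g _ (hPmem i x)) ?_
    intro w hw
    have hw' : ρ g⁻¹ w ∈ W i := hinv i g⁻¹ w hw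
    have : ρ g x - ρ g (P i x) = ρ g (x - P i x) := by rw [map_sub]
    rw [this, ← hcancel g w, LinearIsometryEquiv.inner_map_map]
    have hmem : x - P i x ∈ (W i)ᗮ := by
      rw [hPapply]
      exact Submodule.sub_starProjection_mem_orthogonal x
    exact (Submodule.mem_orthogonal' _ _).1 hmem _ hw'
  -- projections are self-adjoint
  have hPsa : ∀ (i : Fin p) (x y : V), ⟪P i x, y⟫ = ⟪x, P i y⟫ := by
    intro i x y
    rw [hPapply, hPapply]
    exact Submodule.inner_starProjection_left_eq_right (K := W i) x y
  -- the candidate submodule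
  let S : Submodule ℝ (V →ₗ[ℝ] V) :=
    { carrier := setOf (fun A : V →ₗ[ℝ] V =>
        (∀ (g : G) (x : V), A (ρ g x) = ρ g (A x)) ∧
          (∀ x y : V, ⟪A x, y⟫ = ⟪x, A y⟫)),
      add_mem' := by
        rintro A B ⟨hA1, hA2⟩ ⟨hB1, hB2⟩
        constructor
        · intro g x; simp [hA1, hB1]
        · intro x y
          simp only [LinearMap.add_apply, inner_add_left, inner_add_right, hA2 x y, hB2 x y],
      zero_mem' := by
        constructor
        · intro g x; simp
        · intro x y; simp,
      smul_mem' := by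
        rintro c A ⟨hA1, hA2⟩
        constructor
        · intro g x; simp [hA1]
        · intro x y
          simp only [LinearMap.smul_apply, real_inner_smul_left,
            real_inner_smul_right, hA2 x y] }
  refine ⟨S, fun A => Iff.rfl, ?_⟩
  -- membership in S is definitionally the pair of conditions
  have hSspan : ∀ A : V →ₗ[ℝ] V,
      (∀ (g : G) (x : V), A (ρ g x) = ρ g (A x)) →
      (∀ x y : V, ⟪A x, y⟫ = ⟪x, A y⟫) →
      A ∈ Submodule.span ℝ (Set.range P) := by
    intro A hA1 hA2
    -- A preserves each W i
    have hstable : ∀ (i : Fin p), ∀ x ∈ W i, A x ∈ W i := by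
      intro i x hx
      have hz : ∀ j : Fin p, j ≠ i → P j (A x) = 0 := by
        intro j hji
        -- build the intertwining map W i → W j
        set f : W i →ₗ[ℝ] W j :=
          (Submodule.orthogonalProjectionOnto (W j) : V →L[ℝ] W j).toLinearMap ∘ₗ A ∘ₗ (W i).subtype with hf
        have hfc : ∀ y : W i, ((f y : W j) : V) = P j (A (y : V)) := fun y => rfl
        have hfint : ∀ (g : G) (y : W i),
            ((f ⟨ρ g (y : V), hinv i g (y : V) y.2⟩ : W j) : V) = ρ g ((f y : W j) : V) := by
          intro g y
          rw [hfc, hfc]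
          show P j (A (ρ g (y : V))) = ρ g (P j (A (y : V)))
          rw [hA1, hPequiv]
        have hf0 : f = 0 := hnocoupling i j (fun h => hji h.symm) f hfint
        have : ((f ⟨x, hx⟩ : W j) : V) = 0 := by rw [hf0]; rfl
        rw [hfc] at this
        exact this
      have := hPsum (A x)
      rw [Finset.sum_eq_single i (fun j _ hji => hz j hji)
        (fun h => absurd (Finset.mem_univ i) h)] at this
      rw [← this]
      exact hPmem i (A x)
    -- A is scalar on each W i
    have hscalar : ∀ i : Fin p, ∃ μ : ℝ, ∀ x ∈ W i, A x = μ • x := by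
      intro i
      haveI : Nontrivial (W i) := Submodule.nontrivial_iff_ne_bot.2 (hirr i).1
      set B : W i →ₗ[ℝ] W i := A.restrict (hstable i) with hB
      have hBc : ∀ y : W i, ((B y : W i) : V) = A (y : V) := fun y => rfl
      have hBsym : (B : (W i) →ₗ[ℝ] (W i)).IsSymmetric := by
        intro x y
        show (inner ℝ ((B x : W i) : V) ((y : W i) : V) : ℝ) = inner ℝ ((x : W i) : V) ((B y : W i) : V)
        rw [hBc, hBc]
        exact hA2 _ _
      obtain ⟨μ, hμ⟩ : ∃ μ : ℝ, Module.End.HasEigenvalue (B : Module.End ℝ (W i)) μ :=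
        ⟨_, hBsym.hasEigenvalue_iSup_of_finiteDimensional⟩
      obtain ⟨v, hv⟩ := hμ.exists_hasEigenvector
      -- the eigenspace, pushed to V, is invariant
      set U : Submodule ℝ V :=
        (Module.End.eigenspace (B : Module.End ℝ (W i)) μ).map (W i).subtype with hU
      have hUinv : ∀ (g : G), ∀ x ∈ U, ρ g x ∈ U := by
        rintro g x ⟨w, hw, rfl⟩
        refine ⟨⟨ρ g (w : V), hinv i g _ w.2⟩, ?_, rfl⟩
        rw [SetLike.mem_coe, Module.End.mem_eigenspace_iff] at hw ⊢
        apply Subtype.ext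
        show ((B ⟨ρ g (w : V), _⟩ : W i) : V) = ((μ • (⟨ρ g (w : V), _⟩ : W i) : W i) : V)
        rw [hBc]
        show A (ρ g (w : V)) = μ • ρ g (w : V)
        rw [hA1, ← map_smul]
        congr 1
        have := congrArg (Subtype.val) hw
        rw [hBc] at this
        exact this
      have hUle : U ≤ W i := by
        rintro x ⟨w, _, rfl⟩; exact w.2
      have hUne : U ≠ ⊥ := by
        intro h
        have hvU : (v : V) ∈ U := ⟨v, hv.1, rfl⟩
        rw [h, Submodule.mem_bot] at hvU
        exact hv.2 (Subtype.ext hvU)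
      have hUW : U = W i := ((hirr i).2 U hUinv hUle).resolve_left hUne
      refine ⟨μ, fun x hx => ?_⟩
      have hxU : x ∈ U := hUW ▸ hx
      obtain ⟨w, hw, rfl⟩ := hxU
      rw [SetLike.mem_coe, Module.End.mem_eigenspace_iff] at hw
      have h2 := congrArg (Subtype.val) hw
      rw [hBc] at h2
      simpa using h2
    choose μ hμ using hscalar
    -- A equals the linear combination of projections
    have hAeq : A = ∑ i, μ i • P i := by
      apply LinearMap.ext
      intro x
      have hx : x ∈ LinearMap.eqLocus A (∑ i, μ i • P i) := by
        have hle : ⨆ i, W i ≤ LinearMap.eqLocus A (∑ i, μ i • P i) := by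
          refine iSup_le fun i y hy => ?_
          show A y = (∑ j, μ j • P j) y
          rw [LinearMap.sum_apply, Finset.sum_eq_single i]
          · rw [LinearMap.smul_apply, hPself i y hy]
            exact hμ i y hy
          · intro j _ hji
            rw [LinearMap.smul_apply, hPzero i j (fun h => hji h.symm) y hy, smul_zero]
          · intro h; exact absurd (Finset.mem_univ i) h
        rw [hsup] at hle
        exact hle trivial
      exact hx
    rw [hAeq]
    exact Submodule.sum_mem _ fun i _ =>
      Submodule.smul_mem _ _ (Submodule.subset_span ⟨i, rfl⟩)
  -- S = span of the projections
  have hSeq : (S : Set (V →ₗ[ℝ] V)) =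
      (Submodule.span ℝ (Set.range P) : Set (V →ₗ[ℝ] V)) := by
    apply Set.Subset.antisymm
    · rintro A ⟨hA1, hA2⟩
      exact hSspan A hA1 hA2
    · intro A hA
      refine Submodule.span_induction ?_ ?_ ?_ ?_ hA
      · rintro B ⟨i, rfl⟩
        exact ⟨hPequiv i, hPsa i⟩
      · exact ⟨fun g x => by simp, fun x y => by simp⟩
      · rintro B C _ _ ⟨hB1, hB2⟩ ⟨hC1, hC2⟩
        constructor
        · intro g x; simp [hB1, hC1]
        · intro x y; simp only [LinearMap.add_apply, inner_add_left, inner_add_right, hB2, hC2]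
      · rintro c B _ ⟨hB1, hB2⟩
        constructor
        · intro g x; simp [hB1]
        · intro x y; simp only [LinearMap.smul_apply, real_inner_smul_left,
            real_inner_smul_right, hB2]
  -- the projections are linearly independent
  have hind : LinearIndependent ℝ P := by
    rw [linearIndependent_iff']
    intro s g hg i hi
    obtain ⟨v, hv, hv0⟩ := (Submodule.ne_bot_iff (W i)).1 (hirr i).1
    have := congrArg (fun B : V →ₗ[ℝ] V => B v) hg
    simp only [LinearMap.sum_apply, LinearMap.smul_apply, LinearMap.zero_apply] at this
    rw [Finset.sum_eq_single_of_mem i hi] at this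
    · rw [hPself i v hv] at this
      rcases smul_eq_zero.1 this with h | h
      · exact h
      · exact absurd h hv0
    · intro j _ hji
      rw [hPzero i j (fun h => hji h.symm) v hv, smul_zero]
  -- conclude the rank computation
  have hSub : S = Submodule.span ℝ (Set.range P) := SetLike.ext' hSeq
  rw [hSub, finrank_span_eq_card hind, Fintype.card_fin]
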